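/- Under the same setting, if A has full column rank and η(μ_i, r_i) < 0 for all i with all r_i ≠ 0, then the Hessian of f at y is negative definite, hence f is strictly concave in a neighborhood of y. -/

import Mathlib

open Finset

noncomputable def eta (σ : ℝ → ℝ) (μ r : ℝ) : ℝ :=
  (1 / r + 2 * deriv σ μ / σ μ) ^ 2 -
    ((deriv σ μ / σ μ) ^ 2 + deriv (deriv σ) μ / σ μ)

noncomputable def G1 (σ : ℝ → ℝ) (zi : ℝ) (s : ℝ) : ℝ :=
  (-2 * (zi - s) * σ s - 2 * (zi - s) ^ 2 * deriv σ s) / σ s ^ 3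

noncomputable def G2 (σ : ℝ → ℝ) (zi : ℝ) (s : ℝ) : ℝ :=
  ((2 * σ s + 2 * (zi - s) * deriv σ s - 2 * (zi - s) ^ 2 * deriv (deriv σ) s) * σ s
    - 3 * (-2 * (zi - s) * σ s - 2 * (zi - s) ^ 2 * deriv σ s) * deriv σ s) / σ s ^ 4

lemma key1d (σ : ℝ → ℝ) (zi μ : ℝ) (hσ : ContDiffAt ℝ 2 σ μ) (hσpos : 0 < σ μ)
    (hr : zi - μ ≠ 0) (hη : eta σ μ (zi - μ) < 0) :
    ∃ δ > 0, StrictConcaveOn ℝ (Metric.ball μ δ) (fun s => (zi - s) ^ 2 / σ s ^ 2) := by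
  rw [eta] at hη
  obtain ⟨U, hUo, hμU, hcd⟩ := hσ.contDiffOn' le_rfl (by simp)
  rw [Set.insert_eq_of_mem (Set.mem_univ μ), Set.univ_inter] at hcd
  have hU1 : ContDiffOn ℝ 1 (deriv σ) U := hcd.deriv_of_isOpen hUo (by norm_num)
  have hds : ∀ s ∈ U, HasDerivAt σ (deriv σ s) s := fun s hs =>
    ((hcd.differentiableOn (by norm_num) s hs).differentiableAt (hUo.mem_nhds hs)).hasDerivAt
  have hdds : ∀ s ∈ U, HasDerivAt (deriv σ) (deriv (deriv σ) s) s := fun s hs =>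
    ((hU1.differentiableOn (by norm_num) s hs).differentiableAt (hUo.mem_nhds hs)).hasDerivAt
  have hG1 : ∀ s ∈ U, σ s ≠ 0 → HasDerivAt (fun t => (zi - t) ^ 2 / σ t ^ 2) (G1 σ zi s) s := by
    intro s hs hne
    have h1 : HasDerivAt (fun t : ℝ => (zi - t) ^ 2) (-(2 * (zi - s))) s := by
      have := ((hasDerivAt_id s).const_sub zi).fun_pow 2
      simpa using this
    have h2 : HasDerivAt (fun t => σ t ^ 2) (2 * σ s * deriv σ s) s := by
      have := (hds s hs).fun_pow 2
      simpa [mul_comm] using this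
    have := h1.fun_div h2 (pow_ne_zero 2 hne)
    refine this.congr_deriv ?_
    rw [G1]
    field_simp
  have hG2 : ∀ s ∈ U, σ s ≠ 0 → HasDerivAt (G1 σ zi) (G2 σ zi s) s := by
    intro s hs hne
    have ha : HasDerivAt (fun t : ℝ => -2 * (zi - t)) 2 s := by
      have := ((hasDerivAt_id s).const_sub zi).const_mul (-2 : ℝ)
      simpa using this
    have hb : HasDerivAt (fun t : ℝ => -2 * (zi - t) ^ 2) (4 * (zi - s)) s := by
      have := (((hasDerivAt_id s).const_sub zi).fun_pow 2).const_mul (-2 : ℝ)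
      refine (this.congr_deriv ?_)
      simp; ring
    have h1 : HasDerivAt (fun t => -2 * (zi - t) * σ t - 2 * (zi - t) ^ 2 * deriv σ t)
        (2 * σ s + 2 * (zi - s) * deriv σ s - 2 * (zi - s) ^ 2 * deriv (deriv σ) s) s := by
      have h := (ha.fun_mul (hds s hs)).fun_sub ((hb.fun_neg.fun_mul (hdds s hs)))
      convert h using 1
      · rfl
      · rfl
      · funext t; ring_nf
      · ring
    have h2 : HasDerivAt (fun t => σ t ^ 3) (3 * σ s ^ 2 * deriv σ s) s := by
      have := (hds s hs).fun_pow 3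
      simpa [mul_comm] using this
    have := h1.fun_div h2 (pow_ne_zero 3 hne)
    refine this.congr_deriv ?_
    rw [G2]
    field_simp
  have hc0 : ContinuousAt σ μ := hcd.continuousOn.continuousAt (hUo.mem_nhds hμU)
  have hc1 : ContinuousAt (deriv σ) μ :=
    hU1.continuousOn.continuousAt (hUo.mem_nhds hμU)
  have hc2 : ContinuousAt (deriv (deriv σ)) μ :=
    (hU1.continuousOn_deriv_of_isOpen hUo le_rfl).continuousAt (hUo.mem_nhds hμU)
  have hσne : σ μ ≠ 0 := hσpos.ne'
  have hcG2 : ContinuousAt (G2 σ zi) μ := by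
    unfold G2
    exact ContinuousAt.div (by fun_prop) (by fun_prop) (pow_ne_zero 4 hσne)
  have hG2μ : G2 σ zi μ < 0 := by
    have heq : G2 σ zi μ = 2 * ((1 / (zi - μ) + 2 * deriv σ μ / σ μ) ^ 2 -
        ((deriv σ μ / σ μ) ^ 2 + deriv (deriv σ) μ / σ μ)) * (zi - μ) ^ 2 / σ μ ^ 2 := by
      rw [G2]
      field_simp
      ring
    rw [heq]
    apply div_neg_of_neg_of_pos _ (pow_pos hσpos 2)
    have h2 : (0:ℝ) < (zi - μ) ^ 2 := by positivity
    nlinarith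
  have hnhds : U ∩ ({s | 0 < σ s} ∩ {s | G2 σ zi s < 0}) ∈ nhds μ := by
    refine Filter.inter_mem (hUo.mem_nhds hμU) (Filter.inter_mem ?_ ?_)
    · exact hc0.preimage_mem_nhds (Ioi_mem_nhds hσpos)
    · exact hcG2.preimage_mem_nhds (Iio_mem_nhds hG2μ)
  obtain ⟨δ, hδ, hball⟩ := Metric.mem_nhds_iff.1 hnhds
  refine ⟨δ, hδ, ?_⟩
  have hmem : ∀ s ∈ Metric.ball μ δ, s ∈ U ∧ 0 < σ s ∧ G2 σ zi s < 0 := by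
    intro s hs
    have := hball hs
    exact ⟨this.1, this.2.1, this.2.2⟩
  apply strictConcaveOn_of_deriv2_neg (convex_ball μ δ)
  · intro s hs
    obtain ⟨h1, h2, _⟩ := hmem s hs
    exact ((hG1 s h1 h2.ne').differentiableAt.continuousAt).continuousWithinAt
  · intro s hs
    rw [Metric.isOpen_ball.interior_eq] at hs
    obtain ⟨h1, h2, h3⟩ := hmem s hs
    have hev : deriv (fun t => (zi - t) ^ 2 / σ t ^ 2) =ᶠ[nhds s] G1 σ zi := by
      filter_upwards [Metric.isOpen_ball.mem_nhds hs] with t ht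
      obtain ⟨k1, k2, _⟩ := hmem t ht
      exact (hG1 t k1 k2.ne').deriv
    have hiter : deriv^[2] (fun t => (zi - t) ^ 2 / σ t ^ 2) s = deriv (G1 σ zi) s := by
      simp only [Function.iterate_succ, Function.iterate_zero, Function.comp,
        CompTriple.comp_eq, id_eq]
      exact hev.deriv_eq
    rw [hiter, (hG2 s h1 h2.ne').deriv]
    exact h3

lemma quad_eq {m n : ℕ} (A : Matrix (Fin m) (Fin n) ℝ) (c : Fin m → ℝ) (x : Fin n → ℝ) :
    dotProduct x
        (Matrix.mulVec (-(Matrix.of fun k l : Fin n => 2 * ∑ i, A i k * A i l * c i)) x)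
      = ∑ i, (-2 * c i) * (A.mulVec x i) ^ 2 := by
  simp only [dotProduct, Matrix.mulVec, Matrix.neg_apply, Matrix.of_apply]
  simp only [Finset.mul_sum, Finset.sum_mul, mul_neg, neg_mul, Finset.sum_neg_distrib]
  rw [neg_inj]
  have step1 : ∀ k : Fin n, ∑ l : Fin n, ∑ i : Fin m, x k * (2 * (A i k * A i l * c i) * x l)
      = ∑ i : Fin m, ∑ l : Fin n, x k * (2 * (A i k * A i l * c i) * x l) :=
    fun k => Finset.sum_comm
  calc ∑ k : Fin n, ∑ l : Fin n, ∑ i : Fin m, x k * (2 * (A i k * A i l * c i) * x l)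
      = ∑ k : Fin n, ∑ i : Fin m, ∑ l : Fin n, x k * (2 * (A i k * A i l * c i) * x l) :=
        Finset.sum_congr rfl fun k _ => step1 k
    _ = ∑ i : Fin m, ∑ k : Fin n, ∑ l : Fin n, x k * (2 * (A i k * A i l * c i) * x l) :=
        Finset.sum_comm
    _ = ∑ i : Fin m, 2 * c i * (∑ k, A i k * x k) ^ 2 := by
        refine Finset.sum_congr rfl fun i _ => ?_
        rw [sq, Finset.sum_mul_sum, Finset.mul_sum]
        refine Finset.sum_congr rfl fun k _ => ?_
        rw [Finset.mul_sum]
        refine Finset.sum_congr rfl fun l _ => ?_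
        ring

lemma inj_of_rank {m n : ℕ} (A : Matrix (Fin m) (Fin n) ℝ) (hrank : A.rank = n) :
    Function.Injective A.mulVec := by
  have h : LinearMap.ker A.mulVecLin = ⊥ := by
    have h1 := LinearMap.finrank_range_add_finrank_ker A.mulVecLin
    rw [Matrix.rank] at hrank
    rw [hrank, Module.finrank_pi, Fintype.card_fin] at h1
    have h2 : Module.finrank ℝ (LinearMap.ker A.mulVecLin) = 0 := by omega
    exact Submodule.finrank_eq_zero.mp h2
  have := LinearMap.ker_eq_bot.mp h
  exact this

/-- If A has full column rank, σ is positive and C² near each μ_i, all residuals are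
nonzero and η(μ_i, r_i) < 0 for all i, then the Hessian of f at y is negative definite
(i.e. its negation is positive definite), and hence f is strictly concave in a
neighborhood of y. -/
theorem hessian_negdef_strict_concave {m n : ℕ} (A : Matrix (Fin m) (Fin n) ℝ)
    (z : Fin m → ℝ) (σ : ℝ → ℝ) (y : Fin n → ℝ)
    (hrank : A.rank = n)
    (hσ : ∀ i, ContDiffAt ℝ 2 σ (A.mulVec y i))
    (hσpos : ∀ i, 0 < σ (A.mulVec y i))
    (hr : ∀ i, z i - A.mulVec y i ≠ 0)
    (hη : ∀ i, eta σ (A.mulVec y i) (z i - A.mulVec y i) < 0) :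
    (-(Matrix.of fun k l : Fin n =>
      2 * ∑ i, A i k * A i l * eta σ (A.mulVec y i) (z i - A.mulVec y i) *
        (z i - A.mulVec y i) ^ 2 / (σ (A.mulVec y i)) ^ 2)).PosDef ∧
    ∃ ε > 0, StrictConcaveOn ℝ (Metric.ball y ε)
      (fun v : Fin n → ℝ => ∑ i, (z i - A.mulVec v i) ^ 2 / (σ (A.mulVec v i)) ^ 2) := by
  have hinj : Function.Injective A.mulVec := inj_of_rank A hrank
  set μ : Fin m → ℝ := fun i => A.mulVec y i with hμ
  set c : Fin m → ℝ := fun i =>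
    eta σ (μ i) (z i - μ i) * (z i - μ i) ^ 2 / (σ (μ i)) ^ 2 with hc
  have hcneg : ∀ i, c i < 0 := by
    intro i
    apply div_neg_of_neg_of_pos _ (pow_pos (hσpos i) 2)
    have hri := hr i
    exact mul_neg_of_neg_of_pos (hη i) (by positivity)
  have hMeq : (Matrix.of fun k l : Fin n =>
      2 * ∑ i, A i k * A i l * eta σ (A.mulVec y i) (z i - A.mulVec y i) *
        (z i - A.mulVec y i) ^ 2 / (σ (A.mulVec y i)) ^ 2)
      = (Matrix.of fun k l : Fin n => 2 * ∑ i, A i k * A i l * c i) := by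
    ext k l
    simp only [Matrix.of_apply]
    congr 1
    refine Finset.sum_congr rfl fun i _ => ?_
    rw [hc]
    ring
  constructor
  · rw [hMeq]
    refine Matrix.PosDef.of_dotProduct_mulVec_pos ?_ ?_
    · apply Matrix.IsHermitian.neg
      ext k l
      simp only [Matrix.conjTranspose_apply, Matrix.of_apply, star_trivial]
      congr 1
      exact Finset.sum_congr rfl fun i _ => by ring
    · intro x hx
      have hsx : star x = x := funext fun i => rfl
      rw [hsx, quad_eq A c x]
      have hAx : A.mulVec x ≠ 0 := by
        intro h0
        exact hx (hinj (by rw [h0, Matrix.mulVec_zero]))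
      obtain ⟨i₀, hi₀⟩ := Function.ne_iff.mp hAx
      apply Finset.sum_pos'
      · intro i _
        have := hcneg i
        have : (0:ℝ) ≤ -2 * c i := by linarith
        positivity
      · refine ⟨i₀, Finset.mem_univ _, ?_⟩
        have h1 : (0:ℝ) < -2 * c i₀ := by have := hcneg i₀; linarith
        have h2 : (0:ℝ) < (A.mulVec x i₀) ^ 2 := by
          have : A.mulVec x i₀ ≠ 0 := by simpa using hi₀
          positivity
        positivity
  · -- strict concavity
    have hkey : ∀ i, ∃ δ > 0, StrictConcaveOn ℝ (Metric.ball (μ i) δ)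
        (fun s => (z i - s) ^ 2 / σ s ^ 2) := fun i =>
      key1d σ (z i) (μ i) (hσ i) (hσpos i) (hr i) (hη i)
    choose δ hδpos hconc using hkey
    have hcontA : ∀ i, Continuous fun v : Fin n → ℝ => A.mulVec v i := by
      intro i
      show Continuous fun v : Fin n → ℝ => ∑ l, A i l * v l
      exact continuous_finset_sum _ fun l _ => continuous_const.mul (continuous_apply l)
    have hS : (⋂ i, (fun v : Fin n → ℝ => A.mulVec v i) ⁻¹' Metric.ball (μ i) (δ i))
        ∈ nhds y := by
      refine (Filter.iInter_mem).mpr fun i => ?_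
      exact (hcontA i).continuousAt.preimage_mem_nhds (Metric.ball_mem_nhds _ (hδpos i))
    obtain ⟨ε, hε, hball⟩ := Metric.mem_nhds_iff.1 hS
    refine ⟨ε, hε, convex_ball y ε, ?_⟩
    intro x hx w hw hxw a b ha hb hab
    have hmemx : ∀ i, A.mulVec x i ∈ Metric.ball (μ i) (δ i) := by
      intro i; exact Set.mem_iInter.mp (hball hx) i
    have hmemw : ∀ i, A.mulVec w i ∈ Metric.ball (μ i) (δ i) := by
      intro i; exact Set.mem_iInter.mp (hball hw) i
    have hAv : A.mulVec (a • x + b • w) = a • A.mulVec x + b • A.mulVec w := by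
      rw [Matrix.mulVec_add, Matrix.mulVec_smul, Matrix.mulVec_smul]
    have hAvi : ∀ i, A.mulVec (a • x + b • w) i = a * A.mulVec x i + b * A.mulVec w i := by
      intro i; rw [hAv]; simp [smul_eq_mul]
    obtain ⟨i₀, hi₀⟩ := Function.ne_iff.mp (fun h => hxw (hinj h) : A.mulVec x ≠ A.mulVec w)
    simp only [smul_eq_mul, Finset.mul_sum]
    rw [← Finset.sum_add_distrib]
    apply Finset.sum_lt_sum
    · intro i _
      have h := (hconc i).concaveOn.2 (hmemx i) (hmemw i) ha.le hb.le hab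
      simp only [smul_eq_mul] at h
      rw [hAvi i]
      exact h
    · refine ⟨i₀, Finset.mem_univ _, ?_⟩
      have h := (hconc i₀).2 (hmemx i₀) (hmemw i₀) hi₀ ha hb hab
      simp only [smul_eq_mul] at h
      rw [hAvi i₀]
      exact h
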